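/- Let 𝔉 be a Fraïssé class, let ((X,a),(Y,b),i) be an L-datum, and let c be an element of X∖{a} that is stably separated from a in X. Then L((X,a),(Y,b),i) is congruent to L((X∖{c},a),(Y∖{i(c)},b),i') modulo 𝔟₀, where i' is the restriction of i to X∖{a,c}. -/

import Mathlib

/-! # Relational structures, embeddings, amalgamations, Fraïssé classes -/

namespace Paper

/-- A relational signature: a set `I` of relation symbols with arities `≥ 1`. -/
structure Signature : Type 1 where
  I : Type
  arity : I → ℕ
  arity_pos : ∀ i, 1 ≤ arity i

variable {σ : Signature}

/-- A (finite relational) structure for the signature `σ`. -/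
structure Struc (σ : Signature) : Type 1 where
  carrier : Type
  [fin : Finite carrier]
  rel : ∀ i : σ.I, (Fin (σ.arity i) → carrier) → Prop

attribute [instance] Struc.fin

/-- An embedding of structures: an injection under which the relations on the source are
exactly the restrictions of the relations on the target. -/
structure Emb (X Y : Struc σ) : Type where
  toFun : X.carrier → Y.carrier
  inj : Function.Injective toFun
  rel_iff : ∀ (i : σ.I) (v : Fin (σ.arity i) → X.carrier),
    Y.rel i (fun j => toFun (v j)) ↔ X.rel i v

/-- The identity embedding. -/
def Emb.id (X : Struc σ) : Emb X X where
  toFun := fun x => x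
  inj := fun _ _ h => h
  rel_iff := fun _ _ => Iff.rfl

/-- Composition of embeddings. -/
def Emb.comp {X Y Z : Struc σ} (g : Emb Y Z) (f : Emb X Y) : Emb X Z where
  toFun := fun x => g.toFun (f.toFun x)
  inj := fun _ _ h => f.inj (g.inj h)
  rel_iff := fun i v => (g.rel_iff i fun j => f.toFun (v j)).trans (f.rel_iff i v)

/-- An embedding is an isomorphism if it is surjective. -/
def Emb.IsIso {X Y : Struc σ} (f : Emb X Y) : Prop := Function.Surjective f.toFun

/-- Two structures are isomorphic. -/
def StrucIso (X Y : Struc σ) : Prop := ∃ f : Emb X Y, f.IsIso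

theorem strucIso_refl (X : Struc σ) : StrucIso X X := ⟨Emb.id X, fun y => ⟨y, rfl⟩⟩

/-- The induced structure on a subset of the carrier. -/
def Struc.restrict (X : Struc σ) (S : Set X.carrier) : Struc σ where
  carrier := S
  rel := fun i v => X.rel i (fun j => (v j : X.carrier))

/-- The inclusion embedding of an induced substructure into the whole structure. -/
def Struc.subEmb (X : Struc σ) (S : Set X.carrier) : Emb (X.restrict S) X where
  toFun := fun a => a.1
  inj := fun _ _ h => Subtype.ext h
  rel_iff := fun _ _ => Iff.rfl

/-- The inclusion embedding between induced substructures on nested subsets. -/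
def Struc.inclEmb (X : Struc σ) {S T : Set X.carrier} (h : S ⊆ T) :
    Emb (X.restrict S) (X.restrict T) where
  toFun := fun a => ⟨a.1, h a.2⟩
  inj := fun a b hab => Subtype.ext (Subtype.mk_eq_mk.mp (by exact hab))
  rel_iff := fun _ _ => Iff.rfl

/-- An amalgamation of `Y₁` and `Y₂` over `X` (along `i₁`, `i₂`). -/
structure Amalg {X Y₁ Y₂ : Struc σ} (i₁ : Emb X Y₁) (i₂ : Emb X Y₂) : Type 1 where
  Z : Struc σ
  j₁ : Emb Y₁ Z
  j₂ : Emb Y₂ Z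
  comm : ∀ x, j₁.toFun (i₁.toFun x) = j₂.toFun (i₂.toFun x)
  surj : ∀ z, z ∈ Set.range j₁.toFun ∪ Set.range j₂.toFun

/-- Isomorphism of amalgamations: a structure isomorphism commuting with the two
embeddings. -/
def Amalg.Iso {X Y₁ Y₂ : Struc σ} {i₁ : Emb X Y₁} {i₂ : Emb X Y₂}
    (A B : Amalg i₁ i₂) : Prop :=
  ∃ f : Emb A.Z B.Z, f.IsIso ∧ (∀ y, f.toFun (A.j₁.toFun y) = B.j₁.toFun y) ∧
    (∀ y, f.toFun (A.j₂.toFun y) = B.j₂.toFun y)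

/-- A structure lies in the class `F` up to isomorphism. -/
def MemUpIso (F : Set (Struc σ)) (X : Struc σ) : Prop := ∃ W ∈ F, StrucIso X W

theorem memUpIso_of_mem {F : Set (Struc σ)} {X : Struc σ} (h : X ∈ F) : MemUpIso F X :=
  ⟨X, h, strucIso_refl X⟩

/-- A Fraïssé class. -/
structure IsFraisse (F : Set (Struc σ)) : Prop where
  nonempty : F.Nonempty
  finClasses : ∀ n : ℕ, ∃ (m : ℕ) (r : Fin m → Struc σ),
    ∀ X ∈ F, Nat.card X.carrier = n → ∃ α, StrucIso X (r α)
  hereditary : ∀ X ∈ F, ∀ Y : Struc σ, Nonempty (Emb Y X) → MemUpIso F Y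
  amalg : ∀ (X Y₁ Y₂ : Struc σ), X ∈ F → Y₁ ∈ F → Y₂ ∈ F →
    ∀ (i₁ : Emb X Y₁) (i₂ : Emb X Y₂), ∃ A : Amalg i₁ i₂, MemUpIso F A.Z

theorem pair_compl_subset_left {α : Type*} (a b : α) : ({a, b} : Set α)ᶜ ⊆ ({a} : Set α)ᶜ :=
  Set.compl_subset_compl.mpr (fun _ hx => Set.mem_insert_iff.mpr (Or.inl hx))

theorem pair_compl_subset_right {α : Type*} (a b : α) : ({a, b} : Set α)ᶜ ⊆ ({b} : Set α)ᶜ :=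
  Set.compl_subset_compl.mpr (fun _ hx => Set.mem_insert_iff.mpr (Or.inr hx))

/-- The canonical amalgamation of `X∖{a}` and `X∖{b}` over `X∖{a,b}`, namely `X` itself. -/
def canonAmalg (X : Struc σ) (a b : X.carrier) (hab : a ≠ b) :
    Amalg (X.inclEmb (pair_compl_subset_left a b)) (X.inclEmb (pair_compl_subset_right a b)) where
  Z := X
  j₁ := X.subEmb ({a} : Set X.carrier)ᶜ
  j₂ := X.subEmb ({b} : Set X.carrier)ᶜ
  comm := fun _ => rfl
  surj := fun z => by
    by_cases hz : z = a
    · exact Or.inr ⟨⟨z, by simp only [Set.mem_compl_iff, Set.mem_singleton_iff, hz]; exact hab⟩, rfl⟩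
    · exact Or.inl ⟨⟨z, by simp [hz]⟩, rfl⟩

/-- Two distinct elements `a b` of `X` are separated (relative to the class `F`) if `X` is,
up to isomorphism of amalgamations, the unique amalgamation of `X∖{a}` and `X∖{b}` over
`X∖{a,b}` lying in `F`. -/
def Separated (F : Set (Struc σ)) (X : Struc σ) (a b : X.carrier) (hab : a ≠ b) : Prop :=
  ∀ A : Amalg (X.inclEmb (pair_compl_subset_left a b)) (X.inclEmb (pair_compl_subset_right a b)),
    MemUpIso F A.Z → A.Iso (canonAmalg X a b hab)

/-- Stably separated: every embedding into a member of `F` sends `a`, `b` to separated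
elements. -/
def StablySeparated (F : Set (Struc σ)) (X : Struc σ) (a b : X.carrier) (hab : a ≠ b) : Prop :=
  ∀ X' : Struc σ, MemUpIso F X' → ∀ f : Emb X X',
    Separated F X' (f.toFun a) (f.toFun b) (fun h => hab (f.inj h))

/-- Isomorphism of marked structures. -/
def MarkedIso (X : Struc σ) (a : X.carrier) (Y : Struc σ) (b : Y.carrier) : Prop :=
  ∃ f : Emb X Y, f.IsIso ∧ f.toFun a = b

/-- `b` is extraneous in the marked structure `(X, a)` if it is separated from `a`. -/
def Extraneous (F : Set (Struc σ)) (X : Struc σ) (a b : X.carrier) : Prop :=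
  ∃ h : a ≠ b, Separated F X a b h

/-- A marked structure is minimal if it has no extraneous elements. -/
def MinimalMarked (F : Set (Struc σ)) (X : Struc σ) (a : X.carrier) : Prop :=
  ∀ b : X.carrier, ¬ Extraneous F X a b

/-- `f : W → X` is a one-point extension missing exactly `a`. -/
def IsOnePointExt {W X : Struc σ} (f : Emb W X) (a : X.carrier) : Prop :=
  Set.range f.toFun = ({a} : Set X.carrier)ᶜ

end Paper

/-! # The ring `Θ(𝔉)` of a Fraïssé class -/

namespace Paper

variable {σ : Signature}

/-- Generators of `Θ(𝔉)`: one for each embedding between members of `𝔉`. -/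
def ThetaGen (F : Set (Struc σ)) : Type 1 :=
  Σ (X : {X : Struc σ // X ∈ F}) (Y : {Y : Struc σ // Y ∈ F}), Emb X.1 Y.1

/-- The polynomial ring on the generators of `Θ(𝔉)`. -/
abbrev ThetaPoly (F : Set (Struc σ)) := MvPolynomial (ThetaGen F) ℤ

/-- The generator `[i]` for an embedding `i : X → Y` between members of `𝔉`. -/
noncomputable def thetaVar {F : Set (Struc σ)} (X Y : Struc σ) (hX : X ∈ F) (hY : Y ∈ F)
    (f : Emb X Y) : ThetaPoly F :=
  MvPolynomial.X ⟨⟨X, hX⟩, ⟨Y, hY⟩, f⟩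

/-- The defining relations of `Θ(𝔉)`: `[i] = 1` for isomorphisms, `[j∘i] = [j]·[i]`,
and the amalgamation relations `[i] = Σ_α [i'_α]` where `i'_α` runs over a complete
irredundant system of representatives of the isomorphism classes of amalgamations
lying in `𝔉`. -/
def ThetaRels (F : Set (Struc σ)) : Set (ThetaPoly F) :=
  {p | ∃ (X Y : Struc σ) (hX : X ∈ F) (hY : Y ∈ F) (f : Emb X Y),
      f.IsIso ∧ p = thetaVar X Y hX hY f - 1} ∪
  {p | ∃ (X Y Z : Struc σ) (hX : X ∈ F) (hY : Y ∈ F) (hZ : Z ∈ F)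
      (f : Emb X Y) (g : Emb Y Z),
      p = thetaVar X Z hX hZ (g.comp f) - thetaVar Y Z hY hZ g * thetaVar X Y hX hY f} ∪
  {p | ∃ (X Y X' : Struc σ) (hX : X ∈ F) (hY : Y ∈ F) (hX' : X' ∈ F)
      (i : Emb X Y) (f : Emb X X') (m : ℕ) (r : Fin m → Amalg i f)
      (hr : ∀ α, (r α).Z ∈ F),
      (∀ A : Amalg i f, MemUpIso F A.Z → ∃ α, A.Iso (r α)) ∧
      (∀ α β, (r α).Iso (r β) → α = β) ∧
      p = thetaVar X Y hX hY i - ∑ α, thetaVar X' (r α).Z hX' (hr α) ((r α).j₂)}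

/-- The ring `Θ(𝔉)`. -/
abbrev ThetaRing (F : Set (Struc σ)) : Type 1 :=
  ThetaPoly F ⧸ Ideal.span (ThetaRels F)

/-- The class `[i] ∈ Θ(𝔉)` of an embedding between members of `𝔉`. -/
noncomputable def thetaClass {F : Set (Struc σ)} (X Y : Struc σ) (hX : X ∈ F) (hY : Y ∈ F)
    (f : Emb X Y) : ThetaRing F :=
  Ideal.Quotient.mk _ (thetaVar X Y hX hY f)

end Paper

/-! # The polynomial ring `P` on marked structures, L-data and Q-data -/

namespace Paper

open scoped Classical

variable {σ : Signature}

theorem memUpIso_restrict {F : Set (Struc σ)} (hF : IsFraisse F) {X : Struc σ}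
    (hX : MemUpIso F X) (S : Set X.carrier) : MemUpIso F (X.restrict S) := by
  obtain ⟨W, hW, f, hf⟩ := hX
  exact hF.hereditary W hW _ ⟨f.comp (X.subEmb S)⟩

/-- Marked structures whose underlying structure lies in `F` (up to isomorphism). -/
def MarkedIn (F : Set (Struc σ)) : Type 1 :=
  Σ X : {X : Struc σ // MemUpIso F X}, X.1.carrier

/-- Isomorphism of marked structures, as a relation on `MarkedIn F`. -/
def markedInRel (F : Set (Struc σ)) (p q : MarkedIn F) : Prop :=
  MarkedIso p.1.1 p.2 q.1.1 q.2

/-- Isomorphism classes of marked structures in `F`. -/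
def MarkedCls (F : Set (Struc σ)) : Type 1 := Quot (markedInRel F)

/-- The polynomial ring `P` over `ℤ` with one variable for each isomorphism class of
marked structures in `F`. -/
abbrev PRing (F : Set (Struc σ)) : Type 1 := MvPolynomial (MarkedCls F) ℤ

/-- The variable `⟦X,a⟧` of `P`. -/
noncomputable def mVar {F : Set (Struc σ)} (X : Struc σ) (hX : MemUpIso F X)
    (a : X.carrier) : PRing F :=
  MvPolynomial.X (Quot.mk _ ⟨⟨X, hX⟩, a⟩)

/-- For an L-datum `((X,a),(Y,b),i)`: the isomorphism `i : X∖{a} → Y∖{b}` extends to an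
isomorphism `X → Y`. -/
def LExtends {X Y : Struc σ} {a : X.carrier} {b : Y.carrier}
    (i : Emb (X.restrict ({a} : Set X.carrier)ᶜ) (Y.restrict ({b} : Set Y.carrier)ᶜ)) :
    Prop :=
  ∃ g : Emb X Y, g.IsIso ∧
    ∀ w : (X.restrict ({a} : Set X.carrier)ᶜ).carrier, g.toFun w.1 = (i.toFun w).1

/-- `p` is the element `L((X,a),(Y,b),i) = ⟦X,a⟧ − δ − Σ_α ⟦X_α,a⟧` of `P` associated to
the L-datum `((X,a),(Y,b),i)`, computed with respect to some complete irredundant system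
of representatives `X_α` of the isomorphism classes of amalgamations of `X` and `Y` over
`X∖{a} ≅ Y∖{b}` lying in `F` in which `a` and `b` remain distinct. -/
def IsLElt (F : Set (Struc σ)) {X Y : Struc σ} (hX : MemUpIso F X) (hY : MemUpIso F Y)
    (a : X.carrier) (b : Y.carrier)
    (i : Emb (X.restrict ({a} : Set X.carrier)ᶜ) (Y.restrict ({b} : Set Y.carrier)ᶜ))
    (p : PRing F) : Prop :=
  ∃ (m : ℕ)
    (r : Fin m → Amalg (X.subEmb ({a} : Set X.carrier)ᶜ)
      ((Y.subEmb ({b} : Set Y.carrier)ᶜ).comp i))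
    (hr : ∀ α, MemUpIso F (r α).Z),
    (∀ α, (r α).j₁.toFun a ≠ (r α).j₂.toFun b) ∧
    (∀ A : Amalg (X.subEmb ({a} : Set X.carrier)ᶜ)
        ((Y.subEmb ({b} : Set Y.carrier)ᶜ).comp i),
      MemUpIso F A.Z → A.j₁.toFun a ≠ A.j₂.toFun b → ∃ α, A.Iso (r α)) ∧
    (∀ α β, (r α).Iso (r β) → α = β) ∧
    p = mVar X hX a - (if LExtends i then 1 else 0) -
      ∑ α, mVar (r α).Z (hr α) ((r α).j₁.toFun a)

/-- The element `Q(X,a,b) = ⟦X,a⟧·⟦X∖{a},b⟧ − ⟦X,b⟧·⟦X∖{b},a⟧` of `P` associated to a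
Q-datum `(X,a,b)`. -/
noncomputable def qElt {F : Set (Struc σ)} (X : Struc σ) (hX : MemUpIso F X)
    (a b : X.carrier) (hab : a ≠ b)
    (ha : MemUpIso F (X.restrict ({a} : Set X.carrier)ᶜ))
    (hb : MemUpIso F (X.restrict ({b} : Set X.carrier)ᶜ)) : PRing F :=
  mVar X hX a * mVar _ ha ⟨b, Set.mem_compl_singleton_iff.mpr (Ne.symm hab)⟩ -
    mVar X hX b * mVar _ hb ⟨a, Set.mem_compl_singleton_iff.mpr hab⟩

/-- The generators of the ideal `𝔟₀`: the differences `⟦X,a⟧ − ⟦X∖{b},a⟧` over all marked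
structures `(X,a)` with an extraneous element `b`. -/
def B0Set (F : Set (Struc σ)) : Set (PRing F) :=
  {p | ∃ (X : Struc σ) (hX : MemUpIso F X) (a b : X.carrier) (h : a ≠ b),
    Separated F X a b h ∧
    ∃ h' : MemUpIso F (X.restrict ({b} : Set X.carrier)ᶜ),
      p = mVar X hX a -
        mVar (X.restrict ({b} : Set X.carrier)ᶜ) h'
          ⟨a, Set.mem_compl_singleton_iff.mpr h⟩}

/-- The generators of the ideal `𝔟₁`: the elements `L(D)` over all L-data `D`. -/
def LSet (F : Set (Struc σ)) : Set (PRing F) :=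
  {p | ∃ (X Y : Struc σ) (hX : MemUpIso F X) (hY : MemUpIso F Y)
    (a : X.carrier) (b : Y.carrier)
    (i : Emb (X.restrict ({a} : Set X.carrier)ᶜ) (Y.restrict ({b} : Set Y.carrier)ᶜ)),
    i.IsIso ∧ IsLElt F hX hY a b i p}

/-- The generators of the ideal `𝔟₂`: the elements `Q(D)` over all Q-data `D`. -/
def QSet (F : Set (Struc σ)) : Set (PRing F) :=
  {p | ∃ (X : Struc σ) (hX : MemUpIso F X) (a b : X.carrier) (hab : a ≠ b)
    (ha : MemUpIso F (X.restrict ({a} : Set X.carrier)ᶜ))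
    (hb : MemUpIso F (X.restrict ({b} : Set X.carrier)ᶜ)),
    X ∈ F ∧ p = qElt X hX a b hab ha hb}

end Paper

namespace Paper

variable {σ : Signature}

/-- Inverse of a surjective embedding. -/
noncomputable def Emb.inv {X Y : Struc σ} (f : Emb X Y) (hf : f.IsIso) : Emb Y X where
  toFun := fun y => (Equiv.ofBijective f.toFun ⟨f.inj, hf⟩).symm y
  inj := fun _ _ h => (Equiv.ofBijective f.toFun ⟨f.inj, hf⟩).symm.injective h
  rel_iff := fun i v => by
    have h : ∀ y, f.toFun ((Equiv.ofBijective f.toFun ⟨f.inj, hf⟩).symm y) = y := fun y =>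
      Equiv.ofBijective_apply_symm_apply f.toFun ⟨f.inj, hf⟩ y
    have h2 := (f.rel_iff i (fun j => (Equiv.ofBijective f.toFun ⟨f.inj, hf⟩).symm (v j))).symm
    have h3 : (fun j => f.toFun ((Equiv.ofBijective f.toFun ⟨f.inj, hf⟩).symm (v j))) = v := by
      funext j; exact h (v j)
    rw [h3] at h2
    exact h2

theorem Emb.apply_inv {X Y : Struc σ} (f : Emb X Y) (hf : f.IsIso) (y : Y.carrier) :
    f.toFun ((f.inv hf).toFun y) = y :=
  Equiv.ofBijective_apply_symm_apply f.toFun ⟨f.inj, hf⟩ y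

theorem Emb.inv_eq {X Y : Struc σ} (f : Emb X Y) (hf : f.IsIso) {y : Y.carrier}
    {z : X.carrier} (h : f.toFun z = y) : (f.inv hf).toFun y = z :=
  f.inj (by rw [Emb.apply_inv f hf y, h])

theorem Emb.inv_isIso {X Y : Struc σ} (f : Emb X Y) (hf : f.IsIso) : (f.inv hf).IsIso :=
  fun x => ⟨f.toFun x, Emb.inv_eq f hf rfl⟩

/-- Corestriction of an embedding to an induced substructure containing its range. -/
def Emb.cores {X W : Struc σ} (f : Emb X W) (S : Set W.carrier) (h : ∀ x, f.toFun x ∈ S) :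
    Emb X (W.restrict S) where
  toFun := fun x => ⟨f.toFun x, h x⟩
  inj := fun _ _ hxy => f.inj (congrArg Subtype.val hxy)
  rel_iff := fun i v => f.rel_iff i v

theorem StrucIso.trans {X Y Z : Struc σ} (h1 : StrucIso X Y) (h2 : StrucIso Y Z) :
    StrucIso X Z := by
  obtain ⟨f, hf⟩ := h1; obtain ⟨g, hg⟩ := h2
  exact ⟨g.comp f, hg.comp hf⟩

theorem MemUpIso.of_iso {F : Set (Struc σ)} {X Y : Struc σ} (h : StrucIso X Y)
    (hY : MemUpIso F Y) : MemUpIso F X := by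
  obtain ⟨W, hW, hiso⟩ := hY
  exact ⟨W, hW, h.trans hiso⟩

theorem mVar_congr {F : Set (Struc σ)} {X Y : Struc σ} (hX : MemUpIso F X)
    (hY : MemUpIso F Y) {a : X.carrier} {b : Y.carrier} (h : MarkedIso X a Y b) :
    mVar X hX a = mVar Y hY b :=
  congrArg MvPolynomial.X (Quot.sound h)

theorem Amalg.Iso.symm {X Y₁ Y₂ : Struc σ} {i₁ : Emb X Y₁} {i₂ : Emb X Y₂}
    {A B : Amalg i₁ i₂} (h : A.Iso B) : B.Iso A := by
  obtain ⟨f, hf, h1, h2⟩ := h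
  exact ⟨f.inv hf, f.inv_isIso hf, fun y => f.inv_eq hf (h1 y), fun y => f.inv_eq hf (h2 y)⟩

theorem Amalg.Iso.trans {X Y₁ Y₂ : Struc σ} {i₁ : Emb X Y₁} {i₂ : Emb X Y₂}
    {A B C : Amalg i₁ i₂} (h : A.Iso B) (h' : B.Iso C) : A.Iso C := by
  obtain ⟨f, hf, h1, h2⟩ := h
  obtain ⟨g, hg, k1, k2⟩ := h'
  refine ⟨g.comp f, hg.comp hf, fun y => ?_, fun y => ?_⟩
  · show g.toFun (f.toFun _) = _
    rw [h1, k1]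
  · show g.toFun (f.toFun _) = _
    rw [h2, k2]

/-- Amalgamation exists for structures in `F` up to isomorphism. -/
theorem exists_amalg_memUpIso {F : Set (Struc σ)} (hF : IsFraisse F) {X Y₁ Y₂ : Struc σ}
    (hX : MemUpIso F X) (h1 : MemUpIso F Y₁) (h2 : MemUpIso F Y₂)
    (i₁ : Emb X Y₁) (i₂ : Emb X Y₂) : ∃ A : Amalg i₁ i₂, MemUpIso F A.Z := by
  obtain ⟨X₀, hX₀, φ, hφ⟩ := hX
  obtain ⟨W₁, hW₁, ψ₁, hψ₁⟩ := h1
  obtain ⟨W₂, hW₂, ψ₂, hψ₂⟩ := h2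
  obtain ⟨B, hB⟩ := hF.amalg X₀ W₁ W₂ hX₀ hW₁ hW₂
    (ψ₁.comp (i₁.comp (φ.inv hφ))) (ψ₂.comp (i₂.comp (φ.inv hφ)))
  refine ⟨⟨B.Z, B.j₁.comp ψ₁, B.j₂.comp ψ₂, ?_, ?_⟩, hB⟩
  · intro x
    have := B.comm (φ.toFun x)
    show B.j₁.toFun (ψ₁.toFun (i₁.toFun x)) = B.j₂.toFun (ψ₂.toFun (i₂.toFun x))
    have hx : (φ.inv hφ).toFun (φ.toFun x) = x := φ.inv_eq hφ rfl
    simpa [Emb.comp, hx] using this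
  · intro z
    rcases B.surj z with ⟨w, hw⟩ | ⟨w, hw⟩
    · obtain ⟨y, hy⟩ := hψ₁ w
      exact Or.inl ⟨y, by show B.j₁.toFun (ψ₁.toFun y) = z; rw [hy, hw]⟩
    · obtain ⟨y, hy⟩ := hψ₂ w
      exact Or.inr ⟨y, by show B.j₂.toFun (ψ₂.toFun y) = z; rw [hy, hw]⟩

/-- The workhorse: if `a`, `c` are separated in `X`, then any pair of embeddings of
`X∖{a}` and `X∖{c}` into a member of `F` agreeing on `X∖{a,c}` glue to an embedding of
`X`. -/
theorem separated_lift {F : Set (Struc σ)} (hF : IsFraisse F) {X : Struc σ}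
    {a c : X.carrier} (hac : a ≠ c) (hsep : Separated F X a c hac) {W : Struc σ}
    (hW : MemUpIso F W)
    (g : Emb (X.restrict ({a} : Set X.carrier)ᶜ) W)
    (h : Emb (X.restrict ({c} : Set X.carrier)ᶜ) W)
    (hgh : ∀ (x : X.carrier) (hxa : x ∈ ({a} : Set X.carrier)ᶜ)
      (hxc : x ∈ ({c} : Set X.carrier)ᶜ), g.toFun ⟨x, hxa⟩ = h.toFun ⟨x, hxc⟩) :
    ∃ Ψ : Emb X W, (∀ (x : X.carrier) (hxa : x ∈ ({a} : Set X.carrier)ᶜ),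
        Ψ.toFun x = g.toFun ⟨x, hxa⟩) ∧
      (∀ (x : X.carrier) (hxc : x ∈ ({c} : Set X.carrier)ᶜ),
        Ψ.toFun x = h.toFun ⟨x, hxc⟩) := by
  classical
  set S : Set W.carrier := Set.range g.toFun ∪ Set.range h.toFun with hS
  have hgS : ∀ x, g.toFun x ∈ S := fun x => Or.inl ⟨x, rfl⟩
  have hhS : ∀ x, h.toFun x ∈ S := fun x => Or.inr ⟨x, rfl⟩
  have hcomm : ∀ x : (X.restrict ({a, c} : Set X.carrier)ᶜ).carrier,
      (g.cores S hgS).toFun ((X.inclEmb (pair_compl_subset_left a c)).toFun x) =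
      (h.cores S hhS).toFun ((X.inclEmb (pair_compl_subset_right a c)).toFun x) := by
    intro x
    apply Subtype.ext
    exact hgh x.1 _ _
  have hsurj : ∀ z : (W.restrict S).carrier,
      z ∈ Set.range (g.cores S hgS).toFun ∪ Set.range (h.cores S hhS).toFun := by
    rintro ⟨z, hz⟩
    rcases hz with ⟨x, hx⟩ | ⟨x, hx⟩
    · exact Or.inl ⟨x, Subtype.ext hx⟩
    · exact Or.inr ⟨x, Subtype.ext hx⟩
  set A : Amalg (X.inclEmb (pair_compl_subset_left a c))
      (X.inclEmb (pair_compl_subset_right a c)) :=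
    ⟨W.restrict S, g.cores S hgS, h.cores S hhS, hcomm, hsurj⟩ with hA
  obtain ⟨f, hf, h1, h2⟩ := hsep A (memUpIso_restrict hF hW S)
  refine ⟨(W.subEmb S).comp (f.inv hf), fun x hxa => ?_, fun x hxc => ?_⟩
  · show ((f.inv hf).toFun x).1 = _
    have : f.toFun ((g.cores S hgS).toFun ⟨x, hxa⟩) = x := h1 ⟨x, hxa⟩
    rw [f.inv_eq hf this]; rfl
  · show ((f.inv hf).toFun x).1 = _
    have : f.toFun ((h.cores S hhS).toFun ⟨x, hxc⟩) = x := h2 ⟨x, hxc⟩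
    rw [f.inv_eq hf this]; rfl

section Derived

variable {σ : Signature} {X Y : Struc σ} {a : X.carrier} {b : Y.carrier}
  {i : Emb (X.restrict ({a} : Set X.carrier)ᶜ) (Y.restrict ({b} : Set Y.carrier)ᶜ)}
  {c : X.carrier} {d : Y.carrier}

/-- In an amalgamation of `X` and `Y` over `X∖{a}`, the images of `c` and `d = i(c)`
coincide. -/
theorem amalg_e_eq (hac : a ≠ c)
    (hd : d = (i.toFun ⟨c, Set.mem_compl_singleton_iff.mpr (Ne.symm hac)⟩).1)
    (A : Amalg (X.subEmb ({a} : Set X.carrier)ᶜ) ((Y.subEmb ({b} : Set Y.carrier)ᶜ).comp i)) :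
    A.j₂.toFun d = A.j₁.toFun c := by
  have := A.comm ⟨c, Set.mem_compl_singleton_iff.mpr (Ne.symm hac)⟩
  rw [hd]
  exact this.symm

/-- In an amalgamation of `X` and `Y` over `X∖{a} ≅ Y∖{b}` with `a ≠ b`, the range
of `j₂` is exactly the complement of the image of `a`. -/
theorem j2_range (hiso : i.IsIso)
    (A : Amalg (X.subEmb ({a} : Set X.carrier)ᶜ) ((Y.subEmb ({b} : Set Y.carrier)ᶜ).comp i))
    (hne : A.j₁.toFun a ≠ A.j₂.toFun b) :
    Set.range A.j₂.toFun = ({A.j₁.toFun a} : Set A.Z.carrier)ᶜ := by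
  apply Set.eq_of_subset_of_subset
  · rintro _ ⟨y, rfl⟩
    rw [Set.mem_compl_singleton_iff]
    intro hy
    by_cases hb : y = b
    · subst hb; exact hne hy.symm
    · obtain ⟨x, hx⟩ := hiso ⟨y, Set.mem_compl_singleton_iff.mpr hb⟩
      have hcx : A.j₁.toFun x.1 = A.j₂.toFun (i.toFun x).1 := A.comm x
      have hx1 : ((i.toFun x).1 : Y.carrier) = y := by rw [hx]
      rw [hx1] at hcx
      have hxa : x.1 = a := A.j₁.inj (by rw [hcx, hy])
      exact Set.mem_compl_singleton_iff.mp x.2 hxa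
  · intro z hz
    rcases A.surj z with ⟨x, hx⟩ | ⟨y, hy⟩
    · by_cases hxa : x = a
      · exact absurd (by rw [← hx, hxa] : z = A.j₁.toFun a).symm
          (fun h => (Set.mem_compl_singleton_iff.mp hz) h.symm)
      · have hcx : A.j₁.toFun x =
            A.j₂.toFun (i.toFun ⟨x, Set.mem_compl_singleton_iff.mpr hxa⟩).1 :=
          A.comm ⟨x, Set.mem_compl_singleton_iff.mpr hxa⟩
        exact ⟨(i.toFun ⟨x, Set.mem_compl_singleton_iff.mpr hxa⟩).1, by rw [← hcx]; exact hx⟩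
    · exact ⟨y, hy⟩

/-- The derived amalgamation: remove the common image of `c` and `d`. -/
def derivedAmalg (hac : a ≠ c) (hbd : b ≠ d)
    (hd : d = (i.toFun ⟨c, Set.mem_compl_singleton_iff.mpr (Ne.symm hac)⟩).1)
    (i' : Emb
      ((X.restrict ({c} : Set X.carrier)ᶜ).restrict
        ({⟨a, Set.mem_compl_singleton_iff.mpr hac⟩} :
          Set (X.restrict ({c} : Set X.carrier)ᶜ).carrier)ᶜ)
      ((Y.restrict ({d} : Set Y.carrier)ᶜ).restrict
        ({⟨b, Set.mem_compl_singleton_iff.mpr hbd⟩} :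
          Set (Y.restrict ({d} : Set Y.carrier)ᶜ).carrier)ᶜ))
    (hcompat : ∀ w, ((i'.toFun w).1.1 : Y.carrier) =
      (i.toFun ⟨w.1.1, Set.mem_compl_singleton_iff.mpr
        (fun h => Set.mem_compl_singleton_iff.mp w.2 (Subtype.ext h))⟩).1)
    (A : Amalg (X.subEmb ({a} : Set X.carrier)ᶜ) ((Y.subEmb ({b} : Set Y.carrier)ᶜ).comp i)) :
    Amalg ((X.restrict ({c} : Set X.carrier)ᶜ).subEmb
        ({⟨a, Set.mem_compl_singleton_iff.mpr hac⟩} :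
          Set (X.restrict ({c} : Set X.carrier)ᶜ).carrier)ᶜ)
      (((Y.restrict ({d} : Set Y.carrier)ᶜ).subEmb
        ({⟨b, Set.mem_compl_singleton_iff.mpr hbd⟩} :
          Set (Y.restrict ({d} : Set Y.carrier)ᶜ).carrier)ᶜ).comp i') where
  Z := A.Z.restrict ({A.j₁.toFun c} : Set A.Z.carrier)ᶜ
  j₁ := (A.j₁.comp (X.subEmb ({c} : Set X.carrier)ᶜ)).cores _
    (fun x => Set.mem_compl_singleton_iff.mpr
      (fun h => Set.mem_compl_singleton_iff.mp x.2 (A.j₁.inj h)))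
  j₂ := (A.j₂.comp (Y.subEmb ({d} : Set Y.carrier)ᶜ)).cores _
    (fun y => Set.mem_compl_singleton_iff.mpr
      (fun h => Set.mem_compl_singleton_iff.mp y.2
        (A.j₂.inj (h.trans (amalg_e_eq hac hd A).symm))))
  comm := by
    intro w
    apply Subtype.ext
    show A.j₁.toFun w.1.1 = A.j₂.toFun (i'.toFun w).1.1
    rw [hcompat w]
    exact A.comm ⟨w.1.1, Set.mem_compl_singleton_iff.mpr
      (fun h => Set.mem_compl_singleton_iff.mp w.2 (Subtype.ext h))⟩
  surj := by
    rintro ⟨z, hz⟩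
    rcases A.surj z with ⟨x, hx⟩ | ⟨y, hy⟩
    · refine Or.inl ⟨⟨x, Set.mem_compl_singleton_iff.mpr (fun h => ?_)⟩, Subtype.ext hx⟩
      exact Set.mem_compl_singleton_iff.mp hz (by rw [← hx, h])
    · refine Or.inr ⟨⟨y, Set.mem_compl_singleton_iff.mpr (fun h => ?_)⟩, Subtype.ext hy⟩
      exact Set.mem_compl_singleton_iff.mp hz
        (by rw [← hy, h]; exact amalg_e_eq hac hd A)

/-- Isomorphic amalgamations have isomorphic derived amalgamations. -/
theorem derivedAmalg_iso (hac : a ≠ c) (hbd : b ≠ d)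
    (hd : d = (i.toFun ⟨c, Set.mem_compl_singleton_iff.mpr (Ne.symm hac)⟩).1)
    (i' : Emb
      ((X.restrict ({c} : Set X.carrier)ᶜ).restrict
        ({⟨a, Set.mem_compl_singleton_iff.mpr hac⟩} :
          Set (X.restrict ({c} : Set X.carrier)ᶜ).carrier)ᶜ)
      ((Y.restrict ({d} : Set Y.carrier)ᶜ).restrict
        ({⟨b, Set.mem_compl_singleton_iff.mpr hbd⟩} :
          Set (Y.restrict ({d} : Set Y.carrier)ᶜ).carrier)ᶜ))
    (hcompat : ∀ w, ((i'.toFun w).1.1 : Y.carrier) =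
      (i.toFun ⟨w.1.1, Set.mem_compl_singleton_iff.mpr
        (fun h => Set.mem_compl_singleton_iff.mp w.2 (Subtype.ext h))⟩).1)
    {A B : Amalg (X.subEmb ({a} : Set X.carrier)ᶜ) ((Y.subEmb ({b} : Set Y.carrier)ᶜ).comp i)}
    (h : A.Iso B) :
    (derivedAmalg hac hbd hd i' hcompat A).Iso (derivedAmalg hac hbd hd i' hcompat B) := by
  obtain ⟨f, hf, h1, h2⟩ := h
  refine ⟨(f.comp (A.Z.subEmb _)).cores _ (fun z => Set.mem_compl_singleton_iff.mpr
    (fun hh => Set.mem_compl_singleton_iff.mp z.2 (f.inj (hh.trans (h1 c).symm)))),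
    ?_, fun x => ?_, fun y => ?_⟩
  · rintro ⟨w, hw⟩
    obtain ⟨u, hu⟩ := hf w
    refine ⟨⟨u, Set.mem_compl_singleton_iff.mpr (fun h => ?_)⟩, Subtype.ext hu⟩
    exact Set.mem_compl_singleton_iff.mp hw (by rw [← hu, h]; exact h1 c)
  · exact Subtype.ext (h1 x.1)
  · exact Subtype.ext (h2 y.1)

end Derived
section Lift

variable {σ : Signature} {X Y : Struc σ} {a : X.carrier} {b : Y.carrier}
  {i : Emb (X.restrict ({a} : Set X.carrier)ᶜ) (Y.restrict ({b} : Set Y.carrier)ᶜ)}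
  {c : X.carrier} {d : Y.carrier}

/-- An isomorphism of derived amalgamations lifts to an isomorphism of the original
amalgamations, provided the images of `a` and `c` are separated. -/
theorem derived_iso_lift {F : Set (Struc σ)} (hF : IsFraisse F) (hiso : i.IsIso)
    (hac : a ≠ c) (hbd : b ≠ d)
    (hd : d = (i.toFun ⟨c, Set.mem_compl_singleton_iff.mpr (Ne.symm hac)⟩).1)
    (i' : Emb
      ((X.restrict ({c} : Set X.carrier)ᶜ).restrict
        ({⟨a, Set.mem_compl_singleton_iff.mpr hac⟩} :
          Set (X.restrict ({c} : Set X.carrier)ᶜ).carrier)ᶜ)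
      ((Y.restrict ({d} : Set Y.carrier)ᶜ).restrict
        ({⟨b, Set.mem_compl_singleton_iff.mpr hbd⟩} :
          Set (Y.restrict ({d} : Set Y.carrier)ᶜ).carrier)ᶜ))
    (hcompat : ∀ w, ((i'.toFun w).1.1 : Y.carrier) =
      (i.toFun ⟨w.1.1, Set.mem_compl_singleton_iff.mpr
        (fun h => Set.mem_compl_singleton_iff.mp w.2 (Subtype.ext h))⟩).1)
    {A B : Amalg (X.subEmb ({a} : Set X.carrier)ᶜ) ((Y.subEmb ({b} : Set Y.carrier)ᶜ).comp i)}
    (hB : MemUpIso F B.Z)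
    (hneA : A.j₁.toFun a ≠ A.j₂.toFun b) (hneB : B.j₁.toFun a ≠ B.j₂.toFun b)
    (hsepA : Separated F A.Z (A.j₁.toFun a) (A.j₁.toFun c) (fun h => hac (A.j₁.inj h)))
    (h : (derivedAmalg hac hbd hd i' hcompat A).Iso (derivedAmalg hac hbd hd i' hcompat B)) :
    A.Iso B := by
  classical
  obtain ⟨φ, hφ, hφ1, hφ2⟩ := h
  have hrange := j2_range hiso A hneA
  have hj2mem : ∀ y, A.j₂.toFun y ∈ ({A.j₁.toFun a} : Set A.Z.carrier)ᶜ := fun y =>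
    hrange ▸ Set.mem_range_self y
  set j2c : Emb Y (A.Z.restrict ({A.j₁.toFun a} : Set A.Z.carrier)ᶜ) :=
    A.j₂.cores _ hj2mem with hj2cdef
  have hj2c : j2c.IsIso := by
    rintro ⟨z, hz⟩
    have : z ∈ Set.range A.j₂.toFun := hrange.symm ▸ hz
    obtain ⟨y, hy⟩ := this
    exact ⟨y, Subtype.ext hy⟩
  set g : Emb (A.Z.restrict ({A.j₁.toFun a} : Set A.Z.carrier)ᶜ) B.Z :=
    B.j₂.comp (j2c.inv hj2c) with hgdef
  set h' : Emb (A.Z.restrict ({A.j₁.toFun c} : Set A.Z.carrier)ᶜ) B.Z :=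
    (B.Z.subEmb ({B.j₁.toFun c} : Set B.Z.carrier)ᶜ).comp φ with hhdef
  have hgval : ∀ (y : Y.carrier) (hza : A.j₂.toFun y ∈ ({A.j₁.toFun a} : Set A.Z.carrier)ᶜ),
      g.toFun ⟨A.j₂.toFun y, hza⟩ = B.j₂.toFun y := by
    intro y hza
    show B.j₂.toFun ((j2c.inv hj2c).toFun ⟨A.j₂.toFun y, hza⟩) = B.j₂.toFun y
    rw [j2c.inv_eq hj2c (Subtype.ext rfl : j2c.toFun y = ⟨A.j₂.toFun y, hza⟩)]
  have hagree : ∀ (z : A.Z.carrier) (hza : z ∈ ({A.j₁.toFun a} : Set A.Z.carrier)ᶜ)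
      (hzc : z ∈ ({A.j₁.toFun c} : Set A.Z.carrier)ᶜ),
      g.toFun ⟨z, hza⟩ = h'.toFun ⟨z, hzc⟩ := by
    intro z hza hzc
    have : z ∈ Set.range A.j₂.toFun := hrange.symm ▸ hza
    obtain ⟨y, hy⟩ := this
    have hyd : y ≠ d := by
      intro hyd
      apply Set.mem_compl_singleton_iff.mp hzc
      rw [← hy, hyd]
      exact amalg_e_eq hac hd A
    subst hy
    rw [hgval y hza]
    have h2 := congrArg Subtype.val (hφ2 ⟨y, Set.mem_compl_singleton_iff.mpr hyd⟩)
    show _ = (φ.toFun ⟨A.j₂.toFun y, hzc⟩).1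
    have heq : (derivedAmalg hac hbd hd i' hcompat A).j₂.toFun
        ⟨y, Set.mem_compl_singleton_iff.mpr hyd⟩ = ⟨A.j₂.toFun y, hzc⟩ := Subtype.ext rfl
    rw [heq] at h2
    exact h2.symm
  obtain ⟨Ψ, hΨ1, hΨ2⟩ := separated_lift hF (fun h => hac (A.j₁.inj h)) hsepA hB g h' hagree
  have hΨc : Ψ.toFun (A.j₁.toFun c) = B.j₁.toFun c := by
    have h1 : A.j₁.toFun c ∈ ({A.j₁.toFun a} : Set A.Z.carrier)ᶜ :=
      Set.mem_compl_singleton_iff.mpr (fun h => hac (A.j₁.inj h.symm))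
    rw [hΨ1 _ h1]
    have : (⟨A.j₁.toFun c, h1⟩ : (A.Z.restrict ({A.j₁.toFun a} : Set A.Z.carrier)ᶜ).carrier)
        = ⟨A.j₂.toFun d, hj2mem d⟩ := Subtype.ext (amalg_e_eq hac hd A).symm
    rw [this, hgval d (hj2mem d)]
    exact (amalg_e_eq hac hd B).trans rfl
  have hΨiso : Ψ.IsIso := by
    intro w
    by_cases hw : w = B.j₁.toFun c
    · exact ⟨A.j₁.toFun c, by rw [hΨc, hw]⟩
    · obtain ⟨u, hu⟩ := hφ ⟨w, Set.mem_compl_singleton_iff.mpr hw⟩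
      refine ⟨u.1, ?_⟩
      rw [hΨ2 _ u.2]
      show (φ.toFun ⟨u.1, u.2⟩).1 = w
      have : (⟨u.1, u.2⟩ : (A.Z.restrict ({A.j₁.toFun c} : Set A.Z.carrier)ᶜ).carrier) = u :=
        Subtype.ext rfl
      rw [this, hu]
  refine ⟨Ψ, hΨiso, fun x => ?_, fun y => ?_⟩
  · by_cases hxc : x = c
    · rw [hxc]; exact hΨc
    · have h2 : A.j₁.toFun x ∈ ({A.j₁.toFun c} : Set A.Z.carrier)ᶜ :=
        Set.mem_compl_singleton_iff.mpr (fun h => hxc (A.j₁.inj h))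
      rw [hΨ2 _ h2]
      exact congrArg Subtype.val (hφ1 ⟨x, Set.mem_compl_singleton_iff.mpr hxc⟩)
  · rw [hΨ1 _ (hj2mem y)]
    exact hgval y (hj2mem y)

/-- Every amalgamation of `X∖{c}` and `Y∖{d}` arises as the derived amalgamation of
an amalgamation of `X` and `Y`. -/
theorem derived_surj {F : Set (Struc σ)} (hF : IsFraisse F) (hiso : i.IsIso)
    (hac : a ≠ c) (hbd : b ≠ d)
    (hd : d = (i.toFun ⟨c, Set.mem_compl_singleton_iff.mpr (Ne.symm hac)⟩).1)
    (i' : Emb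
      ((X.restrict ({c} : Set X.carrier)ᶜ).restrict
        ({⟨a, Set.mem_compl_singleton_iff.mpr hac⟩} :
          Set (X.restrict ({c} : Set X.carrier)ᶜ).carrier)ᶜ)
      ((Y.restrict ({d} : Set Y.carrier)ᶜ).restrict
        ({⟨b, Set.mem_compl_singleton_iff.mpr hbd⟩} :
          Set (Y.restrict ({d} : Set Y.carrier)ᶜ).carrier)ᶜ))
    (hcompat : ∀ w, ((i'.toFun w).1.1 : Y.carrier) =
      (i.toFun ⟨w.1.1, Set.mem_compl_singleton_iff.mpr
        (fun h => Set.mem_compl_singleton_iff.mp w.2 (Subtype.ext h))⟩).1)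
    (hsepX : Separated F X a c hac) (hY : MemUpIso F Y)
    (B' : Amalg ((X.restrict ({c} : Set X.carrier)ᶜ).subEmb
        ({⟨a, Set.mem_compl_singleton_iff.mpr hac⟩} :
          Set (X.restrict ({c} : Set X.carrier)ᶜ).carrier)ᶜ)
      (((Y.restrict ({d} : Set Y.carrier)ᶜ).subEmb
        ({⟨b, Set.mem_compl_singleton_iff.mpr hbd⟩} :
          Set (Y.restrict ({d} : Set Y.carrier)ᶜ).carrier)ᶜ).comp i'))
    (hB' : MemUpIso F B'.Z)
    (hne' : B'.j₁.toFun ⟨a, Set.mem_compl_singleton_iff.mpr hac⟩ ≠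
      B'.j₂.toFun ⟨b, Set.mem_compl_singleton_iff.mpr hbd⟩) :
    ∃ A : Amalg (X.subEmb ({a} : Set X.carrier)ᶜ) ((Y.subEmb ({b} : Set Y.carrier)ᶜ).comp i),
      MemUpIso F A.Z ∧ A.j₁.toFun a ≠ A.j₂.toFun b ∧
        B'.Iso (derivedAmalg hac hbd hd i' hcompat A) := by
  classical
  obtain ⟨A₀, hA₀⟩ := exists_amalg_memUpIso hF (memUpIso_restrict hF hY ({d} : Set Y.carrier)ᶜ)
    hY hB' (Y.subEmb ({d} : Set Y.carrier)ᶜ) B'.j₂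
  set g : Emb (X.restrict ({a} : Set X.carrier)ᶜ) A₀.Z :=
    A₀.j₁.comp ((Y.subEmb ({b} : Set Y.carrier)ᶜ).comp i) with hgdef
  set h : Emb (X.restrict ({c} : Set X.carrier)ᶜ) A₀.Z := A₀.j₂.comp B'.j₁ with hhdef
  have hagree : ∀ (x : X.carrier) (hxa : x ∈ ({a} : Set X.carrier)ᶜ)
      (hxc : x ∈ ({c} : Set X.carrier)ᶜ), g.toFun ⟨x, hxa⟩ = h.toFun ⟨x, hxc⟩ := by
    intro x hxa hxc
    set w : ((X.restrict ({c} : Set X.carrier)ᶜ).restrict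
        ({⟨a, Set.mem_compl_singleton_iff.mpr hac⟩} :
          Set (X.restrict ({c} : Set X.carrier)ᶜ).carrier)ᶜ).carrier :=
      ⟨⟨x, hxc⟩, Set.mem_compl_singleton_iff.mpr
        (fun hh => (Set.mem_compl_singleton_iff.mp hxa) (congrArg Subtype.val hh))⟩ with hwdef
    have hBc : B'.j₁.toFun ⟨x, hxc⟩ = B'.j₂.toFun (i'.toFun w).1 := B'.comm w
    have hA0c : A₀.j₁.toFun ((i'.toFun w).1).1 = A₀.j₂.toFun (B'.j₂.toFun (i'.toFun w).1) :=
      A₀.comm (i'.toFun w).1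
    show A₀.j₁.toFun (i.toFun ⟨x, hxa⟩).1 = A₀.j₂.toFun (B'.j₁.toFun ⟨x, hxc⟩)
    rw [hBc, ← hA0c, hcompat w]
  obtain ⟨Ψ, hΨ1, hΨ2⟩ := separated_lift hF hac hsepX hA₀ g h hagree
  set S : Set A₀.Z.carrier := Set.range Ψ.toFun ∪ Set.range A₀.j₁.toFun with hSdef
  have hcm : ∀ x : (X.restrict ({a} : Set X.carrier)ᶜ).carrier,
      (Ψ.cores S (fun u => Or.inl ⟨u, rfl⟩)).toFun ((X.subEmb _).toFun x) =
      (A₀.j₁.cores S (fun u => Or.inr ⟨u, rfl⟩)).toFun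
        (((Y.subEmb ({b} : Set Y.carrier)ᶜ).comp i).toFun x) := by
    intro x
    apply Subtype.ext
    show Ψ.toFun x.1 = A₀.j₁.toFun (i.toFun x).1
    have := hΨ1 x.1 x.2
    rw [this]
    rfl
  have hsj : ∀ z : (A₀.Z.restrict S).carrier,
      z ∈ Set.range (Ψ.cores S (fun u => Or.inl ⟨u, rfl⟩)).toFun ∪
        Set.range (A₀.j₁.cores S (fun u => Or.inr ⟨u, rfl⟩)).toFun := by
    rintro ⟨z, hz⟩
    rcases hz with ⟨x, hx⟩ | ⟨y, hy⟩
    · exact Or.inl ⟨x, Subtype.ext hx⟩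
    · exact Or.inr ⟨y, Subtype.ext hy⟩
  set A : Amalg (X.subEmb ({a} : Set X.carrier)ᶜ) ((Y.subEmb ({b} : Set Y.carrier)ᶜ).comp i) :=
    ⟨A₀.Z.restrict S, Ψ.cores S (fun u => Or.inl ⟨u, rfl⟩),
      A₀.j₁.cores S (fun u => Or.inr ⟨u, rfl⟩), hcm, hsj⟩ with hAdef
  have hΨa : Ψ.toFun a = A₀.j₂.toFun (B'.j₁.toFun ⟨a, Set.mem_compl_singleton_iff.mpr hac⟩) :=
    hΨ2 a (Set.mem_compl_singleton_iff.mpr hac)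
  have hA0b : A₀.j₁.toFun b =
      A₀.j₂.toFun (B'.j₂.toFun ⟨b, Set.mem_compl_singleton_iff.mpr hbd⟩) :=
    A₀.comm ⟨b, Set.mem_compl_singleton_iff.mpr hbd⟩
  have hΨc : Ψ.toFun c = A₀.j₁.toFun d := by
    have := hΨ1 c (Set.mem_compl_singleton_iff.mpr (Ne.symm hac))
    rw [this]
    show A₀.j₁.toFun (i.toFun ⟨c, _⟩).1 = A₀.j₁.toFun d
    rw [← hd]
  have hneA : A.j₁.toFun a ≠ A.j₂.toFun b := by
    intro hco
    have hco2 : Ψ.toFun a = A₀.j₁.toFun b := congrArg Subtype.val hco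
    rw [hΨa, hA0b] at hco2
    exact hne' (A₀.j₂.inj hco2)
  have hkey : ∀ z : B'.Z.carrier, A₀.j₂.toFun z ≠ Ψ.toFun c := by
    intro z hco
    rcases B'.surj z with ⟨x, hx⟩ | ⟨y, hy⟩
    · have : Ψ.toFun x.1 = A₀.j₂.toFun z := by
        have hvx : Ψ.toFun x.1 = A₀.j₂.toFun (B'.j₁.toFun x) := hΨ2 x.1 x.2
        rw [hvx, hx]
      rw [hco] at this
      exact Set.mem_compl_singleton_iff.mp x.2 (Ψ.inj this)
    · have : A₀.j₁.toFun y.1 = A₀.j₂.toFun z := by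
        have hcy : A₀.j₁.toFun y.1 = A₀.j₂.toFun (B'.j₂.toFun y) := A₀.comm y
        rw [hcy, hy]
      rw [hco, hΨc] at this
      exact Set.mem_compl_singleton_iff.mp y.2 (A₀.j₁.inj this)
  have hSl₂ : ∀ z : B'.Z.carrier, A₀.j₂.toFun z ∈ S := by
    intro z
    rcases B'.surj z with ⟨x, hx⟩ | ⟨y, hy⟩
    · refine Or.inl ⟨x.1, ?_⟩
      have hvx : Ψ.toFun x.1 = A₀.j₂.toFun (B'.j₁.toFun x) := hΨ2 x.1 x.2
      rw [hvx, hx]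
    · refine Or.inr ⟨y.1, ?_⟩
      have hcy : A₀.j₁.toFun y.1 = A₀.j₂.toFun (B'.j₂.toFun y) := A₀.comm y
      rw [hcy, hy]
  set l₂S : Emb B'.Z (A₀.Z.restrict S) := A₀.j₂.cores S hSl₂ with hl₂Sdef
  have hl₂ne : ∀ z : B'.Z.carrier,
      l₂S.toFun z ∈ ({A.j₁.toFun c} : Set (A₀.Z.restrict S).carrier)ᶜ := by
    intro z
    apply Set.mem_compl_singleton_iff.mpr
    intro hh
    exact hkey z (congrArg Subtype.val hh)
  set ξ : Emb B'.Z ((A₀.Z.restrict S).restrict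
      ({A.j₁.toFun c} : Set (A₀.Z.restrict S).carrier)ᶜ) := l₂S.cores _ hl₂ne with hξdef
  have hξiso : ξ.IsIso := by
    rintro ⟨⟨w, hwS⟩, hwc⟩
    have hwΨc : w ≠ Ψ.toFun c := by
      intro hh
      exact Set.mem_compl_singleton_iff.mp hwc (Subtype.ext hh)
    rcases hwS with ⟨x, hx⟩ | ⟨y, hy⟩
    · have hxc : x ≠ c := fun hh => hwΨc (by rw [← hx, hh])
      refine ⟨B'.j₁.toFun ⟨x, Set.mem_compl_singleton_iff.mpr hxc⟩, ?_⟩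
      apply Subtype.ext
      apply Subtype.ext
      show A₀.j₂.toFun (B'.j₁.toFun ⟨x, Set.mem_compl_singleton_iff.mpr hxc⟩) = w
      have hvx : Ψ.toFun x =
          A₀.j₂.toFun (B'.j₁.toFun ⟨x, Set.mem_compl_singleton_iff.mpr hxc⟩) :=
        hΨ2 x (Set.mem_compl_singleton_iff.mpr hxc)
      rw [← hvx, hx]
    · have hyd : y ≠ d := by
        intro hh
        apply hwΨc
        rw [← hy, hh, hΨc]
      refine ⟨B'.j₂.toFun ⟨y, Set.mem_compl_singleton_iff.mpr hyd⟩, ?_⟩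
      apply Subtype.ext
      apply Subtype.ext
      show A₀.j₂.toFun (B'.j₂.toFun ⟨y, _⟩) = w
      have hcy : A₀.j₁.toFun y =
          A₀.j₂.toFun (B'.j₂.toFun ⟨y, Set.mem_compl_singleton_iff.mpr hyd⟩) :=
        A₀.comm ⟨y, Set.mem_compl_singleton_iff.mpr hyd⟩
      rw [← hcy, hy]
  refine ⟨A, memUpIso_restrict hF hA₀ S, hneA, ξ, hξiso, fun x => ?_, fun y => ?_⟩
  · apply Subtype.ext
    apply Subtype.ext
    show A₀.j₂.toFun (B'.j₁.toFun x) = Ψ.toFun x.1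
    have hvx : Ψ.toFun x.1 = A₀.j₂.toFun (B'.j₁.toFun x) := hΨ2 x.1 x.2
    exact hvx.symm
  · apply Subtype.ext
    apply Subtype.ext
    show A₀.j₂.toFun (B'.j₂.toFun y) = A₀.j₁.toFun y.1
    have hcy : A₀.j₁.toFun y.1 = A₀.j₂.toFun (B'.j₂.toFun y) := A₀.comm y
    rw [hcy]

end Lift
/-- **Proposition 2.12**: if `c` is stably separated from the marked point `a` of the
L-datum `((X,a),(Y,b),i)`, then `L((X,a),(Y,b),i)` is congruent, modulo `𝔟₀`, to
`L((X∖{c},a),(Y∖{i(c)},b),i')`, where `i'` is the restriction of `i`. -/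
theorem L_congruent_of_stablySeparated {σ : Signature} {F : Set (Struc σ)}
    (hF : IsFraisse F) (X Y : Struc σ) (hX : MemUpIso F X) (hY : MemUpIso F Y)
    (a : X.carrier) (b : Y.carrier)
    (i : Emb (X.restrict ({a} : Set X.carrier)ᶜ) (Y.restrict ({b} : Set Y.carrier)ᶜ))
    (hiso : i.IsIso)
    (c : X.carrier) (hac : a ≠ c)
    (hstab : StablySeparated F X a c hac)
    (d : Y.carrier)
    (hd : d = (i.toFun ⟨c, Set.mem_compl_singleton_iff.mpr (Ne.symm hac)⟩).1)
    (hbd : b ≠ d)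
    (i' : Emb
      ((X.restrict ({c} : Set X.carrier)ᶜ).restrict
        ({⟨a, Set.mem_compl_singleton_iff.mpr hac⟩} :
          Set (X.restrict ({c} : Set X.carrier)ᶜ).carrier)ᶜ)
      ((Y.restrict ({d} : Set Y.carrier)ᶜ).restrict
        ({⟨b, Set.mem_compl_singleton_iff.mpr hbd⟩} :
          Set (Y.restrict ({d} : Set Y.carrier)ᶜ).carrier)ᶜ))
    (hcompat : ∀ w, ((i'.toFun w).1.1 : Y.carrier) =
      (i.toFun ⟨w.1.1, Set.mem_compl_singleton_iff.mpr
        (fun h => Set.mem_compl_singleton_iff.mp w.2 (Subtype.ext h))⟩).1)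
    (p p' : PRing F)
    (hp : IsLElt F hX hY a b i p)
    (hp' : IsLElt F (memUpIso_restrict hF hX ({c} : Set X.carrier)ᶜ)
      (memUpIso_restrict hF hY ({d} : Set Y.carrier)ᶜ)
      ⟨a, Set.mem_compl_singleton_iff.mpr hac⟩
      ⟨b, Set.mem_compl_singleton_iff.mpr hbd⟩ i' p') :
    p - p' ∈ Ideal.span (B0Set F) := by
  classical
  obtain ⟨m, r, hr, hne, hcomplete, hirr, hpeq⟩ := hp
  obtain ⟨m', r', hr', hne', hcomplete', hirr', hp'eq⟩ := hp'
  have hsepX : Separated F X a c hac := hstab X hX (Emb.id X)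
  have hsepA : ∀ α, Separated F (r α).Z ((r α).j₁.toFun a) ((r α).j₁.toFun c)
      (fun h => hac ((r α).j₁.inj h)) := fun α => hstab _ (hr α) (r α).j₁
  have hDne : ∀ α, (derivedAmalg hac hbd hd i' hcompat (r α)).j₁.toFun
        ⟨a, Set.mem_compl_singleton_iff.mpr hac⟩ ≠
      (derivedAmalg hac hbd hd i' hcompat (r α)).j₂.toFun
        ⟨b, Set.mem_compl_singleton_iff.mpr hbd⟩ :=
    fun α h => hne α (congrArg Subtype.val h)
  have hDmem : ∀ α, MemUpIso F (derivedAmalg hac hbd hd i' hcompat (r α)).Z :=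
    fun α => memUpIso_restrict hF (hr α) _
  choose π hπ using fun α => hcomplete' (derivedAmalg hac hbd hd i' hcompat (r α))
    (hDmem α) (hDne α)
  have hπinj : Function.Injective π := by
    intro α₁ α₂ hα
    apply hirr
    refine derived_iso_lift hF hiso hac hbd hd i' hcompat (hr α₂) (hne α₁) (hne α₂)
      (hsepA α₁) ?_
    have h2 : (derivedAmalg hac hbd hd i' hcompat (r α₂)).Iso (r' (π α₁)) := by
      rw [hα]; exact hπ α₂
    exact (hπ α₁).trans h2.symm
  have hπsurj : Function.Surjective π := by
    intro β
    obtain ⟨A, hAmem, hAne, hAiso⟩ := derived_surj hF hiso hac hbd hd i' hcompat hsepX hY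
      (r' β) (hr' β) (hne' β)
    obtain ⟨α, hα⟩ := hcomplete A hAmem hAne
    refine ⟨α, (hirr' β (π α) ?_).symm⟩
    exact (hAiso.trans (derivedAmalg_iso hac hbd hd i' hcompat hα)).trans (hπ α)
  have hgen0 : mVar X hX a - mVar (X.restrict ({c} : Set X.carrier)ᶜ)
      (memUpIso_restrict hF hX ({c} : Set X.carrier)ᶜ)
      ⟨a, Set.mem_compl_singleton_iff.mpr hac⟩ ∈ B0Set F :=
    ⟨X, hX, a, c, hac, hsepX, memUpIso_restrict hF hX _, rfl⟩
  have hgenα : ∀ α, mVar (r α).Z (hr α) ((r α).j₁.toFun a) -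
      mVar ((r α).Z.restrict ({(r α).j₁.toFun c} : Set (r α).Z.carrier)ᶜ)
        (memUpIso_restrict hF (hr α) _)
        ⟨(r α).j₁.toFun a, Set.mem_compl_singleton_iff.mpr (fun h => hac ((r α).j₁.inj h))⟩
      ∈ B0Set F :=
    fun α => ⟨(r α).Z, hr α, _, _, fun h => hac ((r α).j₁.inj h), hsepA α,
      memUpIso_restrict hF (hr α) _, rfl⟩
  have hvar : ∀ α, mVar ((r α).Z.restrict ({(r α).j₁.toFun c} : Set (r α).Z.carrier)ᶜ)
      (memUpIso_restrict hF (hr α) _)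
      ⟨(r α).j₁.toFun a, Set.mem_compl_singleton_iff.mpr (fun h => hac ((r α).j₁.inj h))⟩ =
      mVar (r' (π α)).Z (hr' (π α))
        ((r' (π α)).j₁.toFun ⟨a, Set.mem_compl_singleton_iff.mpr hac⟩) := by
    intro α
    obtain ⟨f, hf, h1, h2⟩ := hπ α
    exact mVar_congr _ _ ⟨f, hf, h1 ⟨a, Set.mem_compl_singleton_iff.mpr hac⟩⟩
  have hδ : LExtends i ↔ LExtends i' := by
    constructor
    · rintro ⟨g, hg, hgi⟩
      have hdg : g.toFun c = d := by
        rw [hgi ⟨c, Set.mem_compl_singleton_iff.mpr (Ne.symm hac)⟩, ← hd]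
      refine ⟨(g.comp (X.subEmb ({c} : Set X.carrier)ᶜ)).cores _ (fun x =>
        Set.mem_compl_singleton_iff.mpr (fun hh =>
          Set.mem_compl_singleton_iff.mp x.2 (g.inj (hh.trans hdg.symm)))), ?_, ?_⟩
      · rintro ⟨y, hy⟩
        obtain ⟨x, hx⟩ := hg y
        have hxc : x ≠ c := fun hh =>
          Set.mem_compl_singleton_iff.mp hy (by rw [← hx, hh, hdg])
        exact ⟨⟨x, Set.mem_compl_singleton_iff.mpr hxc⟩, Subtype.ext hx⟩
      · intro w
        apply Subtype.ext
        show g.toFun w.1.1 = (i'.toFun w).1.1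
        rw [hcompat w]
        exact hgi ⟨w.1.1, Set.mem_compl_singleton_iff.mpr
          (fun h => Set.mem_compl_singleton_iff.mp w.2 (Subtype.ext h))⟩
    · rintro ⟨g', hg', hgi'⟩
      have hb' : g'.toFun ⟨a, Set.mem_compl_singleton_iff.mpr hac⟩ =
          ⟨b, Set.mem_compl_singleton_iff.mpr hbd⟩ := by
        obtain ⟨u, hu⟩ := hg' ⟨b, Set.mem_compl_singleton_iff.mpr hbd⟩
        by_cases hu2 : u = ⟨a, Set.mem_compl_singleton_iff.mpr hac⟩
        · rw [← hu2]; exact hu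
        · exfalso
          have hw : u ∈ ({(⟨a, Set.mem_compl_singleton_iff.mpr hac⟩ :
              (X.restrict ({c} : Set X.carrier)ᶜ).carrier)} :
              Set (X.restrict ({c} : Set X.carrier)ᶜ).carrier)ᶜ :=
            Set.mem_compl_singleton_iff.mpr hu2
          have h3 := hgi' ⟨u, hw⟩
          rw [h3] at hu
          exact Set.mem_compl_singleton_iff.mp (i'.toFun ⟨u, hw⟩).2 hu
      have hagree : ∀ (x : X.carrier) (hxa : x ∈ ({a} : Set X.carrier)ᶜ)
          (hxc : x ∈ ({c} : Set X.carrier)ᶜ),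
          ((Y.subEmb ({b} : Set Y.carrier)ᶜ).comp i).toFun ⟨x, hxa⟩ =
          ((Y.subEmb ({d} : Set Y.carrier)ᶜ).comp g').toFun ⟨x, hxc⟩ := by
        intro x hxa hxc
        show (i.toFun ⟨x, hxa⟩).1 = (g'.toFun ⟨x, hxc⟩).1
        have h3 := congrArg Subtype.val (hgi' ⟨⟨x, hxc⟩, Set.mem_compl_singleton_iff.mpr
          (fun hh => Set.mem_compl_singleton_iff.mp hxa (congrArg Subtype.val hh))⟩)
        rw [h3]; exact (hcompat ⟨⟨x, hxc⟩, Set.mem_compl_singleton_iff.mpr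
          (fun hh => Set.mem_compl_singleton_iff.mp hxa (congrArg Subtype.val hh))⟩).symm
      obtain ⟨Ψ, hΨ1, hΨ2⟩ := separated_lift hF hac hsepX hY
        ((Y.subEmb ({b} : Set Y.carrier)ᶜ).comp i)
        ((Y.subEmb ({d} : Set Y.carrier)ᶜ).comp g') hagree
      refine ⟨Ψ, ?_, fun w => ?_⟩
      · intro y
        by_cases hyb : y = b
        · refine ⟨a, ?_⟩
          rw [hΨ2 a (Set.mem_compl_singleton_iff.mpr hac)]
          show (g'.toFun ⟨a, Set.mem_compl_singleton_iff.mpr hac⟩).1 = y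
          rw [hb', hyb]
        · obtain ⟨x, hx⟩ := hiso ⟨y, Set.mem_compl_singleton_iff.mpr hyb⟩
          refine ⟨x.1, ?_⟩
          rw [hΨ1 x.1 x.2]
          show (i.toFun x).1 = y
          rw [hx]
      · exact hΨ1 w.1 w.2
  have hsum : (∑ α, mVar ((r α).Z.restrict ({(r α).j₁.toFun c} : Set (r α).Z.carrier)ᶜ)
        (memUpIso_restrict hF (hr α) _)
        ⟨(r α).j₁.toFun a, Set.mem_compl_singleton_iff.mpr (fun h => hac ((r α).j₁.inj h))⟩) =
      ∑ β, mVar (r' β).Z (hr' β)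
        ((r' β).j₁.toFun ⟨a, Set.mem_compl_singleton_iff.mpr hac⟩) :=
    Fintype.sum_bijective π ⟨hπinj, hπsurj⟩ _ _ hvar
  have hfinal : p - p' =
      (mVar X hX a - mVar (X.restrict ({c} : Set X.carrier)ᶜ)
        (memUpIso_restrict hF hX ({c} : Set X.carrier)ᶜ)
        ⟨a, Set.mem_compl_singleton_iff.mpr hac⟩) -
      ∑ α, (mVar (r α).Z (hr α) ((r α).j₁.toFun a) -
        mVar ((r α).Z.restrict ({(r α).j₁.toFun c} : Set (r α).Z.carrier)ᶜ)
          (memUpIso_restrict hF (hr α) _)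
          ⟨(r α).j₁.toFun a,
            Set.mem_compl_singleton_iff.mpr (fun h => hac ((r α).j₁.inj h))⟩) := by
    rw [hpeq, hp'eq, Finset.sum_sub_distrib, ← hsum]
    simp only [hδ]
    ring
  rw [hfinal]
  exact Ideal.sub_mem _ (Ideal.subset_span hgen0)
    (Ideal.sum_mem _ (fun α _ => Ideal.subset_span (hgenα α)))

end Paper
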